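/- Let ψ : C → ℝ be strictly Σ-convex, let I ⊆ {1,…,n} with |I| = r, and let α_i ∈ [0,1] for i ∈ I. Set c = ∑_{i∈I} α_i v_i and d = ∑_{i∈I} (1 − α_i) v_i. Then ψ(c) + ψ(d) ≤ ∑_{i∈I} ψ(v_i), and equality holds if and only if there is a cone of Σ containing {v_i : i ∈ I, α_i > 0} and a cone of Σ containing {v_i : i ∈ I, α_i < 1}. -/

import Mathlib

open scoped BigOperators Classical

noncomputable section

namespace BBGKZ

/-- The real vector corresponding to the `i`-th integer vector `v i`. -/
def vR {r n : ℕ} (v : Fin n → Fin r → ℤ) (i : Fin n) : Fin r → ℝ := fun j => (v i j : ℝ)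

/-- The complex vector corresponding to the `i`-th integer vector `v i`. -/
def vC {r n : ℕ} (v : Fin n → Fin r → ℤ) (i : Fin n) : Fin r → ℂ := fun j => (v i j : ℂ)

/-- The real vector corresponding to an integer vector. -/
def intVec {r : ℕ} (c : Fin r → ℤ) : Fin r → ℝ := fun j => (c j : ℝ)

/-- The complex vector corresponding to an integer vector. -/
def intVecC {r : ℕ} (c : Fin r → ℤ) : Fin r → ℂ := fun j => (c j : ℂ)

/-- The cone `C = ∑ ℝ_{≥0} v_i`. -/
def coneC {r n : ℕ} (v : Fin n → Fin r → ℤ) : Set (Fin r → ℝ) :=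
  {x | ∃ t : Fin n → ℝ, (∀ i, 0 ≤ t i) ∧ x = ∑ i, t i • vR v i}

/-- The cone `σ_I = ∑_{i ∈ I} ℝ_{≥0} v_i`. -/
def sigmaCone {r n : ℕ} (v : Fin n → Fin r → ℤ) (I : Finset (Fin n)) : Set (Fin r → ℝ) :=
  {x | ∃ t : Fin n → ℝ, (∀ i, 0 ≤ t i) ∧ (∀ i, i ∉ I → t i = 0) ∧ x = ∑ i, t i • vR v i}

/-- `v_I = ∑_{i ∈ I} v_i`. -/
def vSum {r n : ℕ} (v : Fin n → Fin r → ℤ) (I : Finset (Fin n)) : Fin r → ℤ := ∑ i ∈ I, v i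

/-- `Vol_I`: the absolute value of the determinant of the `r × r` matrix whose rows are the
vectors `v i`, `i ∈ I` (defined when `I.card = r`, and `0` otherwise). -/
def Vol {r n : ℕ} (v : Fin n → Fin r → ℤ) (I : Finset (Fin n)) : ℝ :=
  if h : I.card = r then
    |(Matrix.of fun a b : Fin r => vR v (I.orderIsoOfFin h a).1 b).det| else 0

/-- A vector of `ℝ^r` is generic if it lies in no proper linear subspace spanned by integer
vectors. -/
def GenericVec {r : ℕ} (w : Fin r → ℝ) : Prop :=
  ∀ T : Set (Fin r → ℤ), Submodule.span ℝ (intVec '' T) ≠ ⊤ → w ∉ Submodule.span ℝ (intVec '' T)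

/-- The value at `β ∈ ℂ^r` of the `ℂ`-linear extension of `μ : ℝ^r → ℝ`. -/
def muC {r : ℕ} (μ : (Fin r → ℝ) →ₗ[ℝ] ℝ) (β : Fin r → ℂ) : ℂ :=
  ∑ j, β j * (μ (Pi.single j 1) : ℂ)

/-- A solution of `bbGKZ(S, 0)` on `U`, where `S` is `C` or `C°`. -/
def IsSol0 {r n : ℕ} (v : Fin n → Fin r → ℤ) (S : Set (Fin r → ℝ))
    (U : Set (Fin n → ℂ)) (Φ : (Fin r → ℤ) → (Fin n → ℂ) → ℂ) : Prop :=
  (∀ c : Fin r → ℤ, intVec c ∈ S → DifferentiableOn ℂ (Φ c) U) ∧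
  (∀ c : Fin r → ℤ, intVec c ∈ S → ∀ i : Fin n, ∀ x ∈ U,
      fderiv ℂ (Φ c) x (Pi.single i 1) = Φ (c + v i) x) ∧
  (∀ c : Fin r → ℤ, intVec c ∈ S → ∀ μ : (Fin r → ℝ) →ₗ[ℝ] ℝ, ∀ x ∈ U,
      (∑ i, (μ (vR v i) : ℂ) * x i * fderiv ℂ (Φ c) x (Pi.single i 1))
        + (μ (intVec c) : ℂ) * Φ c x = 0)

/-- A solution of `bbGKZ(S, β)` on `U`. -/
def IsSolBeta {r n : ℕ} (v : Fin n → Fin r → ℤ) (S : Set (Fin r → ℝ)) (β : Fin r → ℂ)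
    (U : Set (Fin n → ℂ)) (Φ : (Fin r → ℤ) → (Fin n → ℂ) → ℂ) : Prop :=
  (∀ c : Fin r → ℤ, intVec c ∈ S → DifferentiableOn ℂ (Φ c) U) ∧
  (∀ c : Fin r → ℤ, intVec c ∈ S → ∀ i : Fin n, ∀ x ∈ U,
      fderiv ℂ (Φ c) x (Pi.single i 1) = Φ (c + v i) x) ∧
  (∀ c : Fin r → ℤ, intVec c ∈ S → ∀ μ : (Fin r → ℝ) →ₗ[ℝ] ℝ, ∀ x ∈ U,
      (∑ i, (μ (vR v i) : ℂ) * x i * fderiv ℂ (Φ c) x (Pi.single i 1))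
        + ((μ (intVec c) : ℂ) - muC μ β) * Φ c x = 0)

/-- The coefficients `ξ_{c,d,I}` determined by a generic vector `v0 ∈ C°`:
`ξ_{c,d,I} = (-1)^{deg c}` if `σ_I` is `r`-dimensional and for all sufficiently small `ε > 0`
both `c + ε v0` and `d - ε v0` lie in the interior of `σ_I`, and `0` otherwise. -/
def xiCoef {r n : ℕ} (v : Fin n → Fin r → ℤ) (degZ : (Fin r → ℤ) → ℤ) (v0 : Fin r → ℝ)
    (c d : Fin r → ℤ) (I : Finset (Fin n)) : ℂ :=
  if intVec c ∈ coneC v ∧ intVec d ∈ interior (coneC v) ∧ c + d = vSum v I ∧ I.card = r ∧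
      Submodule.span ℝ (vR v '' (I : Set (Fin n))) = ⊤ ∧
      (∀ᶠ ε in nhdsWithin (0 : ℝ) (Set.Ioi 0),
        intVec c + ε • v0 ∈ interior (sigmaCone v I) ∧
        intVec d - ε • v0 ∈ interior (sigmaCone v I))
  then (-1 : ℂ) ^ (degZ c) else 0

/-- The pairing `⟨Φ, Ψ⟩ = ∑_{c,d,I} ξ_{c,d,I} Vol_I (∏_{i∈I} x_i) Φ_c Ψ_d`, where the
(finitely supported) inner sum is over lattice points `c ∈ C`, `d ∈ C°` with `c + d = v_I`. -/
def pairingXi {r n : ℕ} (v : Fin n → Fin r → ℤ)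
    (ξ : (Fin r → ℤ) → (Fin r → ℤ) → Finset (Fin n) → ℂ)
    (Φ Ψ : (Fin r → ℤ) → (Fin n → ℂ) → ℂ) (x : Fin n → ℂ) : ℂ :=
  ∑ I ∈ Finset.powersetCard r (Finset.univ : Finset (Fin n)),
    ∑ᶠ c : Fin r → ℤ,
      (if intVec c ∈ coneC v ∧ intVec (vSum v I - c) ∈ interior (coneC v) then
        ξ c (vSum v I - c) I * (Vol v I : ℂ) * (∏ i ∈ I, x i) * Φ c x * Ψ (vSum v I - c) x
      else 0)

/-- A finite simplicial fan supported on `C` with rays among the `v_i`, encoded by the finite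
family of index sets of its cones. -/
structure IsFan {r n : ℕ} (v : Fin n → Fin r → ℤ) (Fam : Finset (Finset (Fin n))) : Prop where
  indep : ∀ I ∈ Fam, LinearIndependent ℝ (fun i : {x : Fin n // x ∈ I} => vR v i.1)
  downward : ∀ I ∈ Fam, ∀ J : Finset (Fin n), J ⊆ I → J ∈ Fam
  inter : ∀ I ∈ Fam, ∀ J ∈ Fam, ∃ K ∈ Fam, K ⊆ I ∧ K ⊆ J ∧
    sigmaCone v I ∩ sigmaCone v J = sigmaCone v K
  max_cones : ∀ I ∈ Fam, ∃ J ∈ Fam, I ⊆ J ∧ J.card = r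
  union_eq : (⋃ I ∈ (Fam : Set (Finset (Fin n))), sigmaCone v I) = coneC v

/-- `ψ` is strictly `Σ`-convex. -/
def StrictSigmaConvex {r n : ℕ} (v : Fin n → Fin r → ℤ) (Fam : Finset (Finset (Fin n)))
    (ψ : (Fin r → ℝ) → ℝ) : Prop :=
  ∀ I ∈ Fam, I.card = r → ∃ ℓ : (Fin r → ℝ) →ₗ[ℝ] ℝ,
    (∀ x ∈ sigmaCone v I, ψ x = ℓ x) ∧ (∀ x ∈ coneC v, x ∉ sigmaCone v I → ℓ x < ψ x)

/-- The minimal cone of the fan containing a given point. -/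
def IsMinConeOf {r n : ℕ} (v : Fin n → Fin r → ℤ) (Fam : Finset (Finset (Fin n)))
    (K : Finset (Fin n)) (w : Fin r → ℝ) : Prop :=
  K ∈ Fam ∧ w ∈ sigmaCone v K ∧ ∀ K' ∈ Fam, w ∈ sigmaCone v K' → K ⊆ K'

/-- The cone `C_Σ` of the secondary fan corresponding to `Σ`. -/
def CSigma {r n : ℕ} (v : Fin n → Fin r → ℤ) (Fam : Finset (Finset (Fin n))) :
    Set (Fin n → ℝ) :=
  {η | ∀ I ∈ Fam, I.card = r → ∀ ℓ : (Fin r → ℝ) →ₗ[ℝ] ℝ,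
    (∀ i ∈ I, ℓ (vR v i) = η i) → ∀ j, ℓ (vR v j) ≤ η j}

/-- The index set `L_{c,γ,σ;β}` of the Γ-series. -/
def Lset {r n : ℕ} (v : Fin n → Fin r → ℤ) (I0 : Finset (Fin n)) (β : Fin r → ℂ)
    (c γ : Fin r → ℤ) : Set (Fin n → ℂ) :=
  {l | (∑ i, l i • vC v i) = β - intVecC c
    ∧ (∀ i ∉ I0, ∃ m : ℤ, l i = (m : ℂ))
    ∧ (∃ m : Fin n → ℤ,
        intVecC c + ∑ i ∈ I0ᶜ, l i • vC v i = -intVecC γ + ∑ i ∈ I0, (m i : ℂ) • vC v i)}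

/-- An individual term `∏_i exp(l_i Log x_i)/Γ(1 + l_i)` of the Γ-series.  (Mathlib's
`Complex.Gamma` vanishes at the poles of `Γ`, so `1/Γ` is `0` there.) -/
def gammaTerm {n : ℕ} (l x : Fin n → ℂ) : ℂ :=
  ∏ i, Complex.exp (l i * Complex.log (x i)) / Complex.Gamma (1 + l i)

/-- The region `R(ψ̂)`. -/
def Rregion {r n : ℕ} (v : Fin n → Fin r → ℤ) (Fam : Finset (Finset (Fin n)))
    (ψh : Fin n → ℝ) : Set (Fin n → ℂ) :=
  {x | (∀ i, x i ≠ 0 ∧ |Complex.arg (x i)| < Real.pi) ∧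
    (fun i => -Real.log (‖x i‖) - ψh i) ∈ CSigma v Fam}

/-- The Γ-series `Φ^{γ,σ}_c` with parameter `β`. -/
def GammaSeries {r n : ℕ} (v : Fin n → Fin r → ℤ) (I0 : Finset (Fin n)) (β : Fin r → ℂ)
    (γ c : Fin r → ℤ) (x : Fin n → ℂ) : ℂ :=
  ∑' l : (Lset v I0 β c γ), gammaTerm (l : Fin n → ℂ) x

/-- Absolute and uniform-on-compacts convergence of the Γ-series on a set `S`:
for every compact `K ⊆ S`, `∑_{l ∈ L} sup_{x ∈ K} |term_l(x)| < ∞`. -/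
def ConvergesOn {r n : ℕ} (v : Fin n → Fin r → ℤ) (I0 : Finset (Fin n)) (β : Fin r → ℂ)
    (γ c : Fin r → ℤ) (S : Set (Fin n → ℂ)) : Prop :=
  ∀ K ⊆ S, IsCompact K →
    Summable (fun l : (Lset v I0 β c γ) =>
      sSup ((fun x => ‖gammaTerm (l : Fin n → ℂ) x‖) '' K))

/-- `β ∈ ℂ^r` is generic: it lies in no proper affine subspace of `ℂ^r` defined over `ℚ`. -/
def GenericBeta {r : ℕ} (β : Fin r → ℂ) : Prop :=
  ∀ q : Fin r → ℚ, q ≠ 0 → ∀ q0 : ℚ, (∑ j, (q j : ℂ) * β j) ≠ (q0 : ℂ)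



lemma zero_mem_sigmaCone {r n : ℕ} (v : Fin n → Fin r → ℤ) (K : Finset (Fin n)) :
    (0 : Fin r → ℝ) ∈ sigmaCone v K :=
  ⟨0, fun _ => le_refl 0, fun _ _ => rfl, by simp⟩

lemma add_mem_sigmaCone {r n : ℕ} {v : Fin n → Fin r → ℤ} {K : Finset (Fin n)}
    {x y : Fin r → ℝ} (hx : x ∈ sigmaCone v K) (hy : y ∈ sigmaCone v K) :
    x + y ∈ sigmaCone v K := by
  obtain ⟨t, ht0, hts, rfl⟩ := hx
  obtain ⟨s, hs0, hss, rfl⟩ := hy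
  exact ⟨t + s, fun i => add_nonneg (ht0 i) (hs0 i),
    fun i hi => by simp [hts i hi, hss i hi],
    by rw [← Finset.sum_add_distrib]; simp [add_smul]⟩

lemma smul_mem_sigmaCone {r n : ℕ} {v : Fin n → Fin r → ℤ} {K : Finset (Fin n)}
    {a : ℝ} (ha : 0 ≤ a) {x : Fin r → ℝ} (hx : x ∈ sigmaCone v K) :
    a • x ∈ sigmaCone v K := by
  obtain ⟨t, ht0, hts, rfl⟩ := hx
  exact ⟨a • t, fun i => mul_nonneg ha (ht0 i),
    fun i hi => by simp [hts i hi],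
    by rw [Finset.smul_sum]; simp [smul_smul]⟩

lemma sigmaCone_mono {r n : ℕ} (v : Fin n → Fin r → ℤ) {K J : Finset (Fin n)}
    (h : K ⊆ J) : sigmaCone v K ⊆ sigmaCone v J := by
  rintro x ⟨t, ht0, hts, rfl⟩
  exact ⟨t, ht0, fun i hi => hts i (fun hiK => hi (h hiK)), rfl⟩

lemma coneC_eq_sigmaCone_univ {r n : ℕ} (v : Fin n → Fin r → ℤ) :
    coneC v = sigmaCone v Finset.univ := by
  ext x
  constructor
  · rintro ⟨t, ht0, rfl⟩; exact ⟨t, ht0, fun i hi => absurd (Finset.mem_univ i) hi, rfl⟩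
  · rintro ⟨t, ht0, _, rfl⟩; exact ⟨t, ht0, rfl⟩

lemma vR_mem_sigmaCone {r n : ℕ} (v : Fin n → Fin r → ℤ) {K : Finset (Fin n)}
    {i : Fin n} (hi : i ∈ K) : vR v i ∈ sigmaCone v K := by
  refine ⟨fun j => if j = i then 1 else 0, ?_, ?_, ?_⟩
  · intro j; dsimp only; split <;> norm_num
  · intro j hj; simp only [ite_eq_right_iff]; rintro rfl; exact absurd hi hj
  · simp [ite_smul]

lemma vR_mem_coneC {r n : ℕ} (v : Fin n → Fin r → ℤ) (i : Fin n) :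
    vR v i ∈ coneC v := by
  rw [coneC_eq_sigmaCone_univ]; exact vR_mem_sigmaCone v (Finset.mem_univ i)

lemma sum_mem_sigmaCone {r n : ℕ} {v : Fin n → Fin r → ℤ} {K : Finset (Fin n)}
    (I : Finset (Fin n)) (t : Fin n → ℝ)
    (h0 : ∀ i ∈ I, 0 ≤ t i) (h1 : ∀ i ∈ I, t i ≠ 0 → vR v i ∈ sigmaCone v K) :
    (∑ i ∈ I, t i • vR v i) ∈ sigmaCone v K := by
  classical
  refine Finset.sum_induction _ (· ∈ sigmaCone v K)
    (fun a b ha hb => add_mem_sigmaCone ha hb) (zero_mem_sigmaCone v K) ?_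
  intro i hi
  by_cases hti : t i = 0
  · simp [hti, zero_mem_sigmaCone v K]
  · exact smul_mem_sigmaCone (h0 i hi) (h1 i hi hti)

lemma exists_max_cone {r n : ℕ} {v : Fin n → Fin r → ℤ} {Fam : Finset (Finset (Fin n))}
    (hFam : IsFan v Fam) {x : Fin r → ℝ} (hx : x ∈ coneC v) :
    ∃ J ∈ Fam, J.card = r ∧ x ∈ sigmaCone v J := by
  rw [← hFam.union_eq] at hx
  simp only [Set.mem_iUnion, Finset.mem_coe] at hx
  obtain ⟨I', hI', hxI'⟩ := hx
  obtain ⟨J, hJ, hsub, hcard⟩ := hFam.max_cones I' hI'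
  exact ⟨J, hJ, hcard, sigmaCone_mono v hsub hxI'⟩


theorem statement9
    (r n : ℕ) (hr : 1 ≤ r) (hn : r ≤ n)
    (deg : (Fin r → ℝ) →ₗ[ℝ] ℝ)
    (hdegInt : ∀ m : Fin r → ℤ, ∃ k : ℤ, deg (intVec m) = (k : ℝ))
    (v : Fin n → Fin r → ℤ)
    (hv_inj : Function.Injective v)
    (hv_span : Submodule.span ℝ (Set.range (vR v)) = ⊤)
    (hv_deg : ∀ i, deg (vR v i) = 1)
    (Fam : Finset (Finset (Fin n))) (hFam : IsFan v Fam)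
    (ψ : (Fin r → ℝ) → ℝ) (hψ : StrictSigmaConvex v Fam ψ)
    (I : Finset (Fin n)) (hI : I.card = r)
    (α : Fin n → ℝ) (hα : ∀ i ∈ I, 0 ≤ α i ∧ α i ≤ 1) :
    ψ (∑ i ∈ I, α i • vR v i) + ψ (∑ i ∈ I, (1 - α i) • vR v i) ≤ ∑ i ∈ I, ψ (vR v i) ∧
    (ψ (∑ i ∈ I, α i • vR v i) + ψ (∑ i ∈ I, (1 - α i) • vR v i) = ∑ i ∈ I, ψ (vR v i) ↔
      (∃ K ∈ Fam, ∀ i ∈ I, 0 < α i → vR v i ∈ sigmaCone v K) ∧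
      (∃ K ∈ Fam, ∀ i ∈ I, α i < 1 → vR v i ∈ sigmaCone v K)) := by
  classical
  set c := ∑ i ∈ I, α i • vR v i with hc_def
  set d := ∑ i ∈ I, (1 - α i) • vR v i with hd_def
  have hc : c ∈ coneC v := by
    rw [coneC_eq_sigmaCone_univ]
    exact sum_mem_sigmaCone I α (fun i hi => (hα i hi).1)
      (fun i _ _ => vR_mem_sigmaCone v (Finset.mem_univ i))
  have hd : d ∈ coneC v := by
    rw [coneC_eq_sigmaCone_univ]
    exact sum_mem_sigmaCone I (fun i => 1 - α i) (fun i hi => by linarith [(hα i hi).2])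
      (fun i _ _ => vR_mem_sigmaCone v (Finset.mem_univ i))
  obtain ⟨Jc, hJcF, hJcC, hcJ⟩ := exists_max_cone hFam hc
  obtain ⟨Jd, hJdF, hJdC, hdJ⟩ := exists_max_cone hFam hd
  obtain ⟨ℓc, hℓcEq, hℓcLt⟩ := hψ Jc hJcF hJcC
  obtain ⟨ℓd, hℓdEq, hℓdLt⟩ := hψ Jd hJdF hJdC
  have hℓcLe : ∀ x ∈ coneC v, ℓc x ≤ ψ x := by
    intro x hx
    by_cases hxσ : x ∈ sigmaCone v Jc
    · exact (hℓcEq x hxσ).ge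
    · exact (hℓcLt x hx hxσ).le
  have hℓdLe : ∀ x ∈ coneC v, ℓd x ≤ ψ x := by
    intro x hx
    by_cases hxσ : x ∈ sigmaCone v Jd
    · exact (hℓdEq x hxσ).ge
    · exact (hℓdLt x hx hxσ).le
  have expand : ∀ (ℓ : (Fin r → ℝ) →ₗ[ℝ] ℝ) (t : Fin n → ℝ),
      ℓ (∑ i ∈ I, t i • vR v i) = ∑ i ∈ I, t i * ℓ (vR v i) := by
    intro ℓ t
    rw [map_sum]
    exact Finset.sum_congr rfl (fun i _ => by rw [map_smul, smul_eq_mul])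
  have hψc : ψ c = ∑ i ∈ I, α i * ℓc (vR v i) := by
    rw [hℓcEq c hcJ, hc_def, expand]
  have hψd : ψ d = ∑ i ∈ I, (1 - α i) * ℓd (vR v i) := by
    rw [hℓdEq d hdJ, hd_def, expand]
  have hcomb : ψ c + ψ d = ∑ i ∈ I, (α i * ℓc (vR v i) + (1 - α i) * ℓd (vR v i)) := by
    rw [hψc, hψd, Finset.sum_add_distrib]
  have key : ∀ i ∈ I, α i * ℓc (vR v i) + (1 - α i) * ℓd (vR v i) ≤ ψ (vR v i) := by
    intro i hi
    obtain ⟨hα0, hα1⟩ := hα i hi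
    have h1 := hℓcLe (vR v i) (vR_mem_coneC v i)
    have h2 := hℓdLe (vR v i) (vR_mem_coneC v i)
    nlinarith
  have hineq : ψ c + ψ d ≤ ∑ i ∈ I, ψ (vR v i) := by
    rw [hcomb]; exact Finset.sum_le_sum key
  refine ⟨hineq, ?_, ?_⟩
  · intro heq
    have hterm : ∀ i ∈ I, α i * ℓc (vR v i) + (1 - α i) * ℓd (vR v i) = ψ (vR v i) := by
      rw [hcomb] at heq
      exact (Finset.sum_eq_sum_iff_of_le key).mp heq
    refine ⟨⟨Jc, hJcF, fun i hi hαi => ?_⟩, ⟨Jd, hJdF, fun i hi hαi => ?_⟩⟩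
    · by_contra hmem
      have h1 := hℓcLt (vR v i) (vR_mem_coneC v i) hmem
      have h2 := hℓdLe (vR v i) (vR_mem_coneC v i)
      have h3 := hterm i hi
      obtain ⟨hα0, hα1⟩ := hα i hi
      nlinarith
    · by_contra hmem
      have h1 := hℓdLt (vR v i) (vR_mem_coneC v i) hmem
      have h2 := hℓcLe (vR v i) (vR_mem_coneC v i)
      have h3 := hterm i hi
      obtain ⟨hα0, hα1⟩ := hα i hi
      nlinarith
  · rintro ⟨⟨K, hKF, hK⟩, ⟨K', hK'F, hK'⟩⟩
    obtain ⟨J, hJF, hKJ, hJC⟩ := hFam.max_cones K hKF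
    obtain ⟨J', hJ'F, hK'J', hJ'C⟩ := hFam.max_cones K' hK'F
    obtain ⟨ℓ, hℓEq, _⟩ := hψ J hJF hJC
    obtain ⟨ℓ', hℓ'Eq, _⟩ := hψ J' hJ'F hJ'C
    have hcK : c ∈ sigmaCone v J :=
      sum_mem_sigmaCone I α (fun i hi => (hα i hi).1)
        (fun i hi hne => sigmaCone_mono v hKJ
          (hK i hi (lt_of_le_of_ne (hα i hi).1 (Ne.symm hne))))
    have hdK : d ∈ sigmaCone v J' :=
      sum_mem_sigmaCone I (fun i => 1 - α i) (fun i hi => by linarith [(hα i hi).2])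
        (fun i hi hne => sigmaCone_mono v hK'J'
          (hK' i hi (by
            have := (hα i hi).2
            have hne' : (1 : ℝ) - α i ≠ 0 := hne
            cases lt_or_eq_of_le this with
            | inl h => exact h
            | inr h => exact absurd (by rw [h]; ring) hne')))
    have hψc' : ψ c = ∑ i ∈ I, α i * ψ (vR v i) := by
      rw [hℓEq c hcK, hc_def, expand]
      refine Finset.sum_congr rfl (fun i hi => ?_)
      by_cases hαi : α i = 0
      · simp [hαi]
      · rw [hℓEq (vR v i) (sigmaCone_mono v hKJ
          (hK i hi (lt_of_le_of_ne (hα i hi).1 (Ne.symm hαi))))]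
    have hψd' : ψ d = ∑ i ∈ I, (1 - α i) * ψ (vR v i) := by
      rw [hℓ'Eq d hdK, hd_def, expand]
      refine Finset.sum_congr rfl (fun i hi => ?_)
      by_cases hαi : α i = 1
      · simp [hαi]
      · rw [hℓ'Eq (vR v i) (sigmaCone_mono v hK'J'
          (hK' i hi (lt_of_le_of_ne (hα i hi).2 hαi)))]
    rw [hψc', hψd', ← Finset.sum_add_distrib]
    exact Finset.sum_congr rfl (fun i _ => by ring)


end BBGKZ
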